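/- arXiv:1104.4832 — 3 statements merged into one kernel-verified Lean document; each statement's English description precedes it below -/
import Mathlib

section
/- Let $1 \le p \le n$, let $M_{p,n}$ be a $p \times n$ complex matrix, and let $M_{p-1,n}$ be the $(p-1) \times n$ minor obtained by deleting one row. Then the singular values interlace: $\sigma_i(M_{p,n}) \le \sigma_i(M_{p-1,n}) \le \sigma_{i+1}(M_{p,n})$ for all $1 \le i < p$, where singular values are arranged in increasing order. -/
open Matrix

/-- The singular values of a `p × n` complex matrix, arranged in increasing order:
the square roots of the eigenvalues of `A * Aᴴ`. -/
noncomputable def singVals {p n : ℕ} (A : Matrix (Fin p) (Fin n) ℂ) : Fin p → ℝ :=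
  fun i =>
    Real.sqrt ((Matrix.isHermitian_mul_conjTranspose_self A).eigenvalues
      (Tuple.sort ((Matrix.isHermitian_mul_conjTranspose_self A).eigenvalues) i))

section Aux

open Finset Submodule

variable {m : ℕ}

local notation "⟪" x ", " y "⟫" => @inner ℂ _ _ x y


lemma quad_repr {A : Matrix (Fin m) (Fin m) ℂ} (hA : A.IsHermitian)
    (x : EuclideanSpace ℂ (Fin m)) :
    ⟪x, Matrix.toEuclideanLin A x⟫ =
      ((∑ k, hA.eigenvalues k * ‖⟪hA.eigenvectorBasis k, x⟫‖ ^ 2 : ℝ) : ℂ) := by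
  set b := hA.eigenvectorBasis
  have hsym := Matrix.isHermitian_iff_isSymmetric.mp hA
  have hT : ∀ k, Matrix.toEuclideanLin A (b k) = hA.eigenvalues k • b k := fun k =>
    congrArg (WithLp.equiv 2 (Fin m → ℂ)).symm (hA.mulVec_eigenvectorBasis k)
  rw [← b.sum_inner_mul_inner x (Matrix.toEuclideanLin A x)]
  push_cast
  refine Finset.sum_congr rfl fun k _ => ?_
  have h1 : ⟪b k, Matrix.toEuclideanLin A x⟫ = (hA.eigenvalues k : ℂ) * ⟪b k, x⟫ := by
    rw [← hsym (b k) x, hT k, RCLike.real_smul_eq_coe_smul (K := ℂ), inner_smul_left]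
    simp
  rw [h1, ← inner_conj_symm x (b k)]
  set c := ⟪b k, x⟫ with hc
  rw [show (starRingEnd ℂ) c * ((hA.eigenvalues k : ℂ) * c)
      = (hA.eigenvalues k : ℂ) * ((starRingEnd ℂ) c * c) by ring, RCLike.conj_mul]
  with_unfolding_all rfl

-- Parseval
lemma parseval_sq (b : OrthonormalBasis (Fin m) ℂ (EuclideanSpace ℂ (Fin m)))
    (x : EuclideanSpace ℂ (Fin m)) :
    (‖x‖ ^ 2 : ℝ) = ∑ k, ‖⟪b k, x⟫‖ ^ 2 := by
  have h := b.sum_inner_mul_inner x x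
  have h2 : ∀ k : Fin m, ⟪x, b k⟫ * ⟪b k, x⟫ = ((‖⟪b k, x⟫‖ ^ 2 : ℝ) : ℂ) := by
    intro k
    rw [← inner_conj_symm x (b k), RCLike.conj_mul]
    norm_cast
  rw [Finset.sum_congr rfl (fun k _ => h2 k), ← Complex.ofReal_sum] at h
  have h3 := congrArg Complex.re h
  rw [Complex.ofReal_re] at h3
  rw [h3]
  with_unfolding_all exact (inner_self_eq_norm_sq (𝕜 := ℂ) x).symm

-- membership in span of basis vectors kills other coefficients
lemma inner_eq_zero_of_mem_span (b : OrthonormalBasis (Fin m) ℂ (EuclideanSpace ℂ (Fin m)))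
    (s : Finset (Fin m)) {x : EuclideanSpace ℂ (Fin m)}
    (hx : x ∈ Submodule.span ℂ (b '' ↑s)) {k : Fin m} (hk : k ∉ s) :
    ⟪b k, x⟫ = 0 := by
  induction hx using Submodule.span_induction with
  | mem y hy =>
      obtain ⟨j, hj, rfl⟩ := hy
      exact b.orthonormal.2 (fun h => hk (h ▸ hj))
  | zero => simp
  | add y z _ _ hy hz => rw [inner_add_right, hy, hz, add_zero]
  | smul c y _ hy => rw [inner_smul_right, hy, mul_zero]

-- finrank of span of basis vectors
lemma finrank_span_onb (b : OrthonormalBasis (Fin m) ℂ (EuclideanSpace ℂ (Fin m)))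
    (s : Finset (Fin m)) :
    Module.finrank ℂ (Submodule.span ℂ (b '' ↑s)) = s.card := by
  have li : LinearIndependent ℂ (fun i : s => b i) :=
    b.orthonormal.linearIndependent.comp _ Subtype.coe_injective
  have h := finrank_span_eq_card li
  rw [show (⇑b '' (↑s : Set (Fin m))) = Set.range (fun i : s => b i) from
    Set.image_eq_range _ _, h, Fintype.card_coe]

-- nonzero vector in the intersection
lemma exists_ne_zero_mem_inf (V₁ V₂ : Submodule ℂ (EuclideanSpace ℂ (Fin m)))
    (h : m < Module.finrank ℂ V₁ + Module.finrank ℂ V₂) :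
    ∃ x : EuclideanSpace ℂ (Fin m), x ≠ 0 ∧ x ∈ V₁ ⊓ V₂ := by
  by_contra hc
  push_neg at hc
  have hbot : V₁ ⊓ V₂ = ⊥ := by
    rw [Submodule.eq_bot_iff]
    intro x hx
    by_contra hx0
    exact hx0 (by_contra fun h' => (hc x h') hx)
  have hd : Disjoint V₁ V₂ := disjoint_iff.mpr hbot
  have := Submodule.finrank_add_finrank_le_of_disjoint hd
  rw [finrank_euclideanSpace, Fintype.card_fin] at this
  omega

/-- Extension of a vector by inserting a zero at position `r`, as a linear map. -/
noncomputable def liftL (r : Fin (m + 1)) :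
    EuclideanSpace ℂ (Fin m) →ₗ[ℂ] EuclideanSpace ℂ (Fin (m + 1)) where
  toFun y := WithLp.toLp 2 (r.insertNth 0 y)
  map_add' y z := by
    ext j
    refine Fin.succAboveCases r ?_ ?_ j <;>
      simp [Fin.insertNth_apply_same, Fin.insertNth_apply_succAbove]
  map_smul' c y := by
    ext j
    refine Fin.succAboveCases r ?_ ?_ j <;>
      simp [Fin.insertNth_apply_same, Fin.insertNth_apply_succAbove]

lemma liftL_apply_same (r : Fin (m + 1)) (y : EuclideanSpace ℂ (Fin m)) :
    liftL r y r = 0 := by with_unfolding_all exact Fin.insertNth_apply_same (α := fun _ => ℂ) r 0 y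

lemma liftL_apply_succAbove (r : Fin (m + 1)) (y : EuclideanSpace ℂ (Fin m)) (i : Fin m) :
    liftL r y (r.succAbove i) = y i := by
  with_unfolding_all exact Fin.insertNth_apply_succAbove (α := fun _ => ℂ) r 0 y i

lemma liftL_injective (r : Fin (m + 1)) : Function.Injective (liftL r) := by
  intro y z h
  ext i
  have := congrArg (fun v => v (r.succAbove i)) h
  simpa [liftL_apply_succAbove] using this

lemma inner_liftL (r : Fin (m + 1)) (y z : EuclideanSpace ℂ (Fin m)) :
    ⟪liftL r y, liftL r z⟫ = ⟪y, z⟫ := by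
  simp only [PiLp.inner_apply, RCLike.inner_apply]
  rw [Fin.sum_univ_succAbove _ r]
  simp [liftL_apply_same, liftL_apply_succAbove]

lemma norm_liftL (r : Fin (m + 1)) (y : EuclideanSpace ℂ (Fin m)) :
    ‖liftL r y‖ = ‖y‖ := by
  have := inner_liftL r y y
  rw [inner_self_eq_norm_sq_to_K, inner_self_eq_norm_sq_to_K] at this
  have h2 : (‖liftL r y‖ : ℝ) ^ 2 = ‖y‖ ^ 2 := by exact_mod_cast this
  nlinarith [norm_nonneg (liftL r y), norm_nonneg y]

lemma quad_liftL {A : Matrix (Fin (m + 1)) (Fin (m + 1)) ℂ} {B : Matrix (Fin m) (Fin m) ℂ}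
    (r : Fin (m + 1)) (hBA : ∀ i j, B i j = A (r.succAbove i) (r.succAbove j))
    (y : EuclideanSpace ℂ (Fin m)) :
    ⟪liftL r y, Matrix.toEuclideanLin A (liftL r y)⟫ = ⟪y, Matrix.toEuclideanLin B y⟫ := by
  have hx : ∀ j, (Matrix.toEuclideanLin A (liftL r y)) j = ∑ k, A j k * (liftL r y) k := by
    intro j; rfl
  have hy : ∀ i, (Matrix.toEuclideanLin B y) i = ∑ k, B i k * y k := by intro i; rfl
  simp only [PiLp.inner_apply, RCLike.inner_apply]
  rw [Fin.sum_univ_succAbove _ r]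
  rw [liftL_apply_same]
  simp only [map_zero, zero_mul, mul_zero, zero_add, hx, hy]
  refine Finset.sum_congr rfl fun i _ => ?_
  rw [liftL_apply_succAbove]
  congr 1
  rw [Fin.sum_univ_succAbove _ r, liftL_apply_same, mul_zero, zero_add]
  refine Finset.sum_congr rfl fun k _ => ?_
  rw [liftL_apply_succAbove, hBA]
lemma sum_bound_le (b : OrthonormalBasis (Fin m) ℂ (EuclideanSpace ℂ (Fin m)))
    (μ : Fin m → ℝ) (s : Finset (Fin m)) (x : EuclideanSpace ℂ (Fin m))
    (hx : ∀ k ∉ s, ⟪b k, x⟫ = 0) (c : ℝ) (hc : ∀ k ∈ s, μ k ≤ c) :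
    ∑ k, μ k * ‖⟪b k, x⟫‖ ^ 2 ≤ c * ‖x‖ ^ 2 := by
  rw [parseval_sq b x, Finset.mul_sum]
  refine Finset.sum_le_sum fun k _ => ?_
  by_cases hk : k ∈ s
  · exact mul_le_mul_of_nonneg_right (hc k hk) (by positivity)
  · rw [hx k hk]; simp

lemma sum_bound_ge (b : OrthonormalBasis (Fin m) ℂ (EuclideanSpace ℂ (Fin m)))
    (μ : Fin m → ℝ) (s : Finset (Fin m)) (x : EuclideanSpace ℂ (Fin m))
    (hx : ∀ k ∉ s, ⟪b k, x⟫ = 0) (c : ℝ) (hc : ∀ k ∈ s, c ≤ μ k) :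
    c * ‖x‖ ^ 2 ≤ ∑ k, μ k * ‖⟪b k, x⟫‖ ^ 2 := by
  rw [parseval_sq b x, Finset.mul_sum]
  refine Finset.sum_le_sum fun k _ => ?_
  by_cases hk : k ∈ s
  · exact mul_le_mul_of_nonneg_right (hc k hk) (by positivity)
  · rw [hx k hk]; simp
lemma eig_interlace {p : ℕ} {A : Matrix (Fin (p + 1)) (Fin (p + 1)) ℂ} (hA : A.IsHermitian)
    (r : Fin (p + 1)) {B : Matrix (Fin p) (Fin p) ℂ} (hB : B.IsHermitian)
    (hBA : ∀ i j, B i j = A (r.succAbove i) (r.succAbove j)) (i : Fin p) :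
    hA.eigenvalues (Tuple.sort hA.eigenvalues i.castSucc) ≤
        hB.eigenvalues (Tuple.sort hB.eigenvalues i) ∧
      hB.eigenvalues (Tuple.sort hB.eigenvalues i) ≤
        hA.eigenvalues (Tuple.sort hA.eigenvalues i.succ) := by
  set eA := hA.eigenvectorBasis with heA
  set eB := hB.eigenvectorBasis with heB
  set μA := hA.eigenvalues with hμA
  set μB := hB.eigenvalues with hμB
  set sA := Tuple.sort μA with hsA
  set sB := Tuple.sort μB with hsB
  have hmA : Monotone (μA ∘ sA) := Tuple.monotone_sort μA
  have hmB : Monotone (μB ∘ sB) := Tuple.monotone_sort μB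
  -- generic step
  have key : ∀ (s₁ : Finset (Fin (p + 1))) (s₂ : Finset (Fin p)),
      p + 1 < s₁.card + s₂.card →
      ∃ (x : EuclideanSpace ℂ (Fin (p + 1))) (y : EuclideanSpace ℂ (Fin p)),
        x = liftL r y ∧ x ≠ 0 ∧ y ≠ 0 ∧
        x ∈ Submodule.span ℂ (eA '' ↑s₁) ∧ y ∈ Submodule.span ℂ (eB '' ↑s₂) := by
    intro s₁ s₂ hcard
    set W : Submodule ℂ (EuclideanSpace ℂ (Fin (p + 1))) := Submodule.span ℂ (eA '' ↑s₁)
    set VB : Submodule ℂ (EuclideanSpace ℂ (Fin p)) := Submodule.span ℂ (eB '' ↑s₂)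
    set V : Submodule ℂ (EuclideanSpace ℂ (Fin (p + 1))) := VB.map (liftL r)
    have hW : Module.finrank ℂ W = s₁.card := finrank_span_onb eA s₁
    have hVB : Module.finrank ℂ VB = s₂.card := finrank_span_onb eB s₂
    have hV : Module.finrank ℂ V = s₂.card := by
      rw [← hVB]
      exact (Submodule.equivMapOfInjective (liftL r) (liftL_injective r) VB).symm.finrank_eq
    obtain ⟨x, hx0, hxmem⟩ := exists_ne_zero_mem_inf W V (by omega)
    obtain ⟨hxW, hxV⟩ := Submodule.mem_inf.mp hxmem
    obtain ⟨y, hyVB, hyx⟩ := Submodule.mem_map.mp hxV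
    refine ⟨x, y, hyx.symm, hx0, ?_, hxW, hyVB⟩
    rintro rfl
    exact hx0 (by rw [← hyx, map_zero])
  -- quad equality packaged
  have quadeq : ∀ (y : EuclideanSpace ℂ (Fin p)),
      (∑ k, μA k * ‖⟪eA k, liftL r y⟫‖ ^ 2 : ℝ) = ∑ k, μB k * ‖⟪eB k, y⟫‖ ^ 2 := by
    intro y
    have h1 := quad_repr hA (liftL r y)
    have h2 := quad_repr hB y
    have h3 := quad_liftL r hBA y
    rw [h1, h2] at h3
    exact_mod_cast h3
  constructor
  · -- μA (sA i.castSucc) ≤ μB (sB i)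
    obtain ⟨x, y, rfl, hx0, hy0, hxW, hyV⟩ :=
      key ((Finset.Ici i.castSucc).image sA) ((Finset.Iic i).image sB) (by
        rw [Finset.card_image_of_injective _ (Equiv.injective sA),
          Finset.card_image_of_injective _ (Equiv.injective sB), Fin.card_Ici, Fin.card_Iic]
        simp only [Fin.coe_castSucc]
        omega)
    have hN : (0 : ℝ) < ‖y‖ ^ 2 := by
      have := norm_pos_iff.mpr hy0
      positivity
    have hlow : μA (sA i.castSucc) * ‖liftL r y‖ ^ 2 ≤
        ∑ k, μA k * ‖⟪eA k, liftL r y⟫‖ ^ 2 := by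
      refine sum_bound_ge eA μA _ _ (fun k hk => inner_eq_zero_of_mem_span eA _ hxW hk) _ ?_
      intro k hk
      obtain ⟨j, hj, rfl⟩ := Finset.mem_image.mp hk
      exact hmA (Finset.mem_Ici.mp hj)
    have hup : ∑ k, μB k * ‖⟪eB k, y⟫‖ ^ 2 ≤ μB (sB i) * ‖y‖ ^ 2 := by
      refine sum_bound_le eB μB _ _ (fun k hk => inner_eq_zero_of_mem_span eB _ hyV hk) _ ?_
      intro k hk
      obtain ⟨j, hj, rfl⟩ := Finset.mem_image.mp hk
      exact hmB (Finset.mem_Iic.mp hj)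
    rw [norm_liftL, quadeq y] at hlow
    have := hlow.trans hup
    exact le_of_mul_le_mul_right (by linarith) hN
  · -- μB (sB i) ≤ μA (sA i.succ)
    obtain ⟨x, y, rfl, hx0, hy0, hxW, hyV⟩ :=
      key ((Finset.Iic i.succ).image sA) ((Finset.Ici i).image sB) (by
        rw [Finset.card_image_of_injective _ (Equiv.injective sA),
          Finset.card_image_of_injective _ (Equiv.injective sB), Fin.card_Iic, Fin.card_Ici]
        simp only [Fin.val_succ]
        omega)
    have hN : (0 : ℝ) < ‖y‖ ^ 2 := by
      have := norm_pos_iff.mpr hy0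
      positivity
    have hup : ∑ k, μA k * ‖⟪eA k, liftL r y⟫‖ ^ 2 ≤
        μA (sA i.succ) * ‖liftL r y‖ ^ 2 := by
      refine sum_bound_le eA μA _ _ (fun k hk => inner_eq_zero_of_mem_span eA _ hxW hk) _ ?_
      intro k hk
      obtain ⟨j, hj, rfl⟩ := Finset.mem_image.mp hk
      exact hmA (Finset.mem_Iic.mp hj)
    have hlow : μB (sB i) * ‖y‖ ^ 2 ≤ ∑ k, μB k * ‖⟪eB k, y⟫‖ ^ 2 := by
      refine sum_bound_ge eB μB _ _ (fun k hk => inner_eq_zero_of_mem_span eB _ hyV hk) _ ?_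
      intro k hk
      obtain ⟨j, hj, rfl⟩ := Finset.mem_image.mp hk
      exact hmB (Finset.mem_Ici.mp hj)
    rw [norm_liftL, quadeq y] at hup
    have := hlow.trans hup
    exact le_of_mul_le_mul_right (by linarith) hN

end Aux

/-- Cauchy interlacing for singular values under deletion of one row. -/
theorem singular_value_interlacing_row_deletion
    {p n : ℕ} (hpn : p + 1 ≤ n)
    (M : Matrix (Fin (p + 1)) (Fin n) ℂ) (r : Fin (p + 1))
    (M' : Matrix (Fin p) (Fin n) ℂ)
    (hM' : ∀ (i : Fin p) (j : Fin n), M' i j = M (r.succAbove i) j) :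
    ∀ i : Fin p,
      singVals M (Fin.castSucc i) ≤ singVals M' i ∧
        singVals M' i ≤ singVals M i.succ := by
  intro i
  have hA := Matrix.isHermitian_mul_conjTranspose_self M
  have hB := Matrix.isHermitian_mul_conjTranspose_self M'
  have hBA : ∀ a b, (M' * M'ᴴ) a b = (M * Mᴴ) (r.succAbove a) (r.succAbove b) := by
    intro a b
    simp [Matrix.mul_apply, Matrix.conjTranspose_apply, hM']
  obtain ⟨h1, h2⟩ := eig_interlace hA r hB hBA i
  exact ⟨Real.sqrt_le_sqrt h1, Real.sqrt_le_sqrt h2⟩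
end

section
/- Let $A_n$ be an $n \times n$ Hermitian matrix written in block form with top-left $(n-1)\times(n-1)$ block $A_{n-1}$, last column $X \in \mathbb{C}^{n-1}$ above the diagonal entry $a_{nn}$. Let $u_1, \ldots, u_{n-1}$ be an orthonormal eigenbasis of $A_{n-1}$ with eigenvalues $\lambda_1(A_{n-1}), \ldots, \lambda_{n-1}(A_{n-1})$, and suppose $X$ is not orthogonal to any $u_j$, and that $\lambda_i(A_n)$ is not an eigenvalue of $A_{n-1}$. Then for every $1 \le i \le n$: $\sum_{j=1}^{n-1} \frac{|u_j^* X|^2}{\lambda_j(A_{n-1}) - \lambda_i(A_n)} = a_{nn} - \lambda_i(A_n)$. -/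
open Matrix

/-- The Cauchy interlacing identity for a Hermitian matrix and its top-left minor. -/
theorem hermitian_interlacing_identity
    {m : ℕ} (A : Matrix (Fin (m + 1)) (Fin (m + 1)) ℂ) (hA : A.IsHermitian)
    (B : Matrix (Fin m) (Fin m) ℂ)
    (hB : ∀ i j : Fin m, B i j = A (Fin.castSucc i) (Fin.castSucc j))
    (X : Fin m → ℂ) (hX : ∀ j : Fin m, X j = A (Fin.castSucc j) (Fin.last m))
    (u : Fin m → EuclideanSpace ℂ (Fin m)) (hu : Orthonormal ℂ u)
    (μ : Fin m → ℝ) (heig : ∀ j : Fin m, B *ᵥ (u j) = (μ j : ℂ) • (u j : Fin m → ℂ))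
    (hXu : ∀ j : Fin m, star (u j : Fin m → ℂ) ⬝ᵥ X ≠ 0)
    (i : Fin (m + 1))
    (hsep : ∀ j : Fin m, μ j ≠ hA.eigenvalues i) :
    ∑ j : Fin m,
        ((‖star (u j : Fin m → ℂ) ⬝ᵥ X‖)^2 : ℂ) /
          ((μ j : ℂ) - (hA.eigenvalues i : ℂ)) =
      A (Fin.last m) (Fin.last m) - (hA.eigenvalues i : ℂ) := by
  classical
  set lam : ℂ := (hA.eigenvalues i : ℂ) with hlam
  set w : Fin (m + 1) → ℂ := ⇑(hA.eigenvectorBasis i) with hwdef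
  have hw : A *ᵥ w = lam • w := by
    have h := hA.mulVec_eigenvectorBasis i
    rw [hwdef, h, hlam]
    ext k
    simp [Complex.real_smul]
  set v : Fin m → ℂ := fun k => w (Fin.castSucc k) with hvdef
  set t : ℂ := w (Fin.last m) with htdef
  set c : Fin m → ℂ := fun j => star (u j : Fin m → ℂ) ⬝ᵥ X with hcdef
  set d : Fin m → ℂ := fun j => star (u j : Fin m → ℂ) ⬝ᵥ v with hddef
  -- row equations
  have hrow : B *ᵥ v + t • X = lam • v := by
    ext k
    have h := congrFun hw (Fin.castSucc k)
    simp only [mulVec, dotProduct, Pi.smul_apply, Pi.add_apply, smul_eq_mul] at h ⊢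
    rw [Fin.sum_univ_castSucc] at h
    rw [show (∑ j, B k j * v j) = ∑ j, A (Fin.castSucc k) (Fin.castSucc j) * w (Fin.castSucc j)
      from Finset.sum_congr rfl fun j _ => by rw [hB], hX, mul_comm]
    exact h
  have hconjX : ∀ j : Fin m, A (Fin.last m) (Fin.castSucc j) = (starRingEnd ℂ) (X j) := by
    intro j
    rw [hX]
    have h := congrFun (congrFun hA (Fin.last m)) (Fin.castSucc j)
    simpa [conjTranspose_apply] using h.symm
  have hlast : star X ⬝ᵥ v + A (Fin.last m) (Fin.last m) * t = lam * t := by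
    have h := congrFun hw (Fin.last m)
    simp only [mulVec, dotProduct, Pi.smul_apply, smul_eq_mul] at h ⊢
    rw [Fin.sum_univ_castSucc] at h
    rw [show (∑ j, (star X) j * v j) = ∑ j, A (Fin.last m) (Fin.castSucc j) * w (Fin.castSucc j)
      from Finset.sum_congr rfl fun j _ => by simp [hconjX j, hvdef]]
    exact h
  -- B is Hermitian
  have hBH : B.IsHermitian := by
    ext j k
    simp only [conjTranspose_apply, hB]
    exact congrFun (congrFun hA (Fin.castSucc j)) (Fin.castSucc k)
  -- coefficient equations
  have hcoef : ∀ j : Fin m, (μ j : ℂ) * d j + t * c j = lam * d j := by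
    intro j
    have h := congrArg (star : (Fin m → ℂ) → (Fin m → ℂ)) (heig j)
    rw [star_mulVec, hBH.eq] at h
    have h2 := congrArg (fun y => star (u j : Fin m → ℂ) ⬝ᵥ y) hrow
    simp only [dotProduct_add, dotProduct_smul, dotProduct_mulVec, smul_eq_mul] at h2
    rw [h] at h2
    simp only [star_smul, smul_dotProduct, smul_eq_mul, RCLike.star_def,
      Complex.conj_ofReal] at h2
    exact h2
  -- orthonormal basis
  have hcard : Fintype.card (Fin m) = Module.finrank ℂ (EuclideanSpace ℂ (Fin m)) := by
    simp [finrank_euclideanSpace]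
  have hspan : ⊤ ≤ Submodule.span ℂ (Set.range u) :=
    (hu.linearIndependent.span_eq_top_of_card_eq_finrank' hcard).ge
  let b : OrthonormalBasis (Fin m) ℂ (EuclideanSpace ℂ (Fin m)) := OrthonormalBasis.mk hu hspan
  have hbcoe : ⇑b = u := OrthonormalBasis.coe_mk hu hspan
  have hinner : ∀ j : Fin m, (inner ℂ (u j) (WithLp.toLp 2 v : EuclideanSpace ℂ (Fin m)) : ℂ) = d j := by
    intro j
    rw [hddef]
    simp [PiLp.inner_apply, dotProduct]
    exact Finset.sum_congr rfl fun x _ => mul_comm _ _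
  have hsum0 : ∑ j, d j • u j = (WithLp.toLp 2 v : EuclideanSpace ℂ (Fin m)) := by
    have h := b.sum_repr' (WithLp.toLp 2 v : EuclideanSpace ℂ (Fin m))
    rw [hbcoe] at h
    simp only [hinner] at h
    exact h
  have hvsum : ∀ k : Fin m, v k = ∑ j, d j * (u j : Fin m → ℂ) k := by
    intro k
    have h2 := congrArg (WithLp.linearEquiv 2 ℂ (Fin m → ℂ)) hsum0
    rw [map_sum] at h2
    simp only [_root_.map_smul] at h2
    have h3 := congrFun h2 k
    simp only [Finset.sum_apply, Pi.smul_apply, smul_eq_mul] at h3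
    exact h3.symm
  -- t ≠ 0
  have hmu_ne : ∀ j : Fin m, (μ j : ℂ) ≠ lam := by
    intro j h
    rw [hlam] at h
    exact hsep j (Complex.ofReal_inj.mp h)
  have ht : t ≠ 0 := by
    intro ht0
    have hd0 : ∀ j, d j = 0 := by
      intro j
      have h := hcoef j
      rw [ht0, zero_mul, add_zero] at h
      by_contra hd
      exact hmu_ne j (mul_right_cancel₀ hd h)
    have hw0 : hA.eigenvectorBasis i = 0 := by
      ext k
      show w k = 0
      refine Fin.lastCases ?_ ?_ k
      · exact ht0
      · intro k
        have := hvsum k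
        simpa [hd0] using this
    exact hA.eigenvectorBasis.orthonormal.ne_zero i hw0
  -- solve for d j
  have hd : ∀ j : Fin m, d j = t * c j / (lam - (μ j : ℂ)) := by
    intro j
    have h := hcoef j
    have hne : lam - (μ j : ℂ) ≠ 0 := sub_ne_zero.mpr (fun h' => hmu_ne j h'.symm)
    field_simp
    linear_combination -h
  -- star X ⬝ᵥ v
  have hXv : star X ⬝ᵥ v = ∑ j, d j * (starRingEnd ℂ) (c j) := by
    have hcc : ∀ j : Fin m, (starRingEnd ℂ) (c j) = ∑ k, (star X) k * (u j : Fin m → ℂ) k := by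
      intro j
      rw [hcdef]
      simp [dotProduct, map_sum, mul_comm]
    calc star X ⬝ᵥ v = ∑ k, ∑ j, (star X) k * (d j * (u j : Fin m → ℂ) k) := by
          simp only [dotProduct, Finset.mul_sum]
          exact Finset.sum_congr rfl fun k _ => by rw [← Finset.mul_sum, ← hvsum k]
      _ = ∑ j, ∑ k, (star X) k * (d j * (u j : Fin m → ℂ) k) := Finset.sum_comm
      _ = ∑ j, d j * (starRingEnd ℂ) (c j) := by
          refine Finset.sum_congr rfl fun j _ => ?_
          rw [hcc j, Finset.mul_sum]
          exact Finset.sum_congr rfl fun k _ => by ring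
  -- final computation
  have habs : ∀ j : Fin m, ((‖c j‖)^2 : ℂ) = c j * (starRingEnd ℂ) (c j) := by
    intro j
    rw [Complex.mul_conj]
    norm_cast
    rw [Complex.sq_norm]
  have h1 : star X ⬝ᵥ v = t * ∑ j, ((‖c j‖)^2 : ℂ) / (lam - (μ j : ℂ)) := by
    rw [hXv, Finset.mul_sum]
    refine Finset.sum_congr rfl fun j _ => ?_
    have hne : lam - (μ j : ℂ) ≠ 0 := sub_ne_zero.mpr (fun h' => hmu_ne j h'.symm)
    rw [hd j, habs j]
    field_simp
  rw [h1] at hlast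
  have h2 : t * (∑ j, ((‖c j‖)^2 : ℂ) / (lam - (μ j : ℂ)))
      = t * (lam - A (Fin.last m) (Fin.last m)) := by
    linear_combination hlast
  have hS : (∑ j, ((‖c j‖)^2 : ℂ) / (lam - (μ j : ℂ)))
      = lam - A (Fin.last m) (Fin.last m) := mul_left_cancel₀ ht h2
  have h3 : ∑ j : Fin m, ((‖c j‖)^2 : ℂ) / ((μ j : ℂ) - lam)
      = -∑ j, ((‖c j‖)^2 : ℂ) / (lam - (μ j : ℂ)) := by
    rw [← Finset.sum_neg_distrib]
    refine Finset.sum_congr rfl fun j _ => ?_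
    rw [show (μ j : ℂ) - lam = -(lam - (μ j : ℂ)) by ring, div_neg]
  calc ∑ j : Fin m, ((‖c j‖)^2 : ℂ) / ((μ j : ℂ) - lam)
      = -∑ j, ((‖c j‖)^2 : ℂ) / (lam - (μ j : ℂ)) := h3
    _ = A (Fin.last m) (Fin.last m) - lam := by rw [hS]; ring
end

section
/- Let $0 < y < 1$, $a = (1-\sqrt{y})^2$, $b = (1+\sqrt{y})^2$, and $\rho_{MP,y}$ the Marchenko–Pastur density. Then the principal value integral at the left edge satisfies $\mathrm{p.v.}\int_a^b \frac{\rho_{MP,y}(x)}{x - a}\,dx = \frac{1}{\sqrt{y} - y}$. -/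
open Real MeasureTheory intervalIntegral Set

lemma mp_integrable (a b : ℝ) (ha : 0 < a) (hab : a < b) :
    IntervalIntegrable (fun x => Real.sqrt (b - x) / (x * Real.sqrt (x - a)))
      volume a b := by
  have base : IntervalIntegrable (fun x => (x - a) ^ (-(1/2) : ℝ)) volume a b := by
    have h := (intervalIntegrable_rpow' (a := 0) (b := b - a) (r := -(1/2)) (by norm_num)).comp_sub_right a
    simpa using h
  have base' : IntervalIntegrable (fun x => (Real.sqrt (b - a) / a) * (x - a) ^ (-(1/2) : ℝ)) volume a b :=
    base.const_mul _
  apply base'.mono_fun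
  · apply Measurable.aestronglyMeasurable
    exact ((Real.continuous_sqrt.comp (continuous_const.sub continuous_id)).measurable).div
      (measurable_id.mul ((Real.continuous_sqrt.comp (continuous_id.sub continuous_const)).measurable))
  · rw [Filter.EventuallyLE, ae_restrict_iff' measurableSet_uIoc]
    filter_upwards with x hx
    rw [Set.uIoc_of_le hab.le] at hx
    obtain ⟨hax, hxb⟩ := hx
    have hx0 : 0 < x := ha.trans hax
    have hA : 0 < Real.sqrt (x - a) := Real.sqrt_pos.2 (by linarith)
    have hrpow : (x - a) ^ (-(1/2) : ℝ) = 1 / Real.sqrt (x - a) := by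
      rw [Real.rpow_neg (by linarith), Real.sqrt_eq_rpow]
      norm_num
    rw [norm_of_nonneg (by positivity),
      norm_of_nonneg (mul_nonneg (by positivity) (Real.rpow_nonneg (by linarith) _)), hrpow]
    rw [mul_one_div, div_div]
    apply div_le_div₀ (by positivity) (Real.sqrt_le_sqrt (by linarith)) (mul_pos ha hA)
    exact mul_le_mul_of_nonneg_right hax.le (Real.sqrt_nonneg _)

lemma mp_d1 (a b x : ℝ) (hab : a < b) (hx : x ∈ Set.Ioo a b) :
    HasDerivAt (fun x => Real.arcsin (Real.sqrt ((x - a) / (b - a))))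
      (1 / (2 * Real.sqrt (x - a) * Real.sqrt (b - x))) x := by
  obtain ⟨hax, hxb⟩ := hx
  have hba : (0:ℝ) < b - a := by linarith
  have hxa : (0:ℝ) < x - a := by linarith
  have hbx : (0:ℝ) < b - x := by linarith
  set A := Real.sqrt (x - a) with hA
  set B := Real.sqrt (b - x) with hB
  set S := Real.sqrt (b - a) with hS
  have hA0 : 0 < A := Real.sqrt_pos.2 hxa
  have hB0 : 0 < B := Real.sqrt_pos.2 hbx
  have hS0 : 0 < S := Real.sqrt_pos.2 hba
  have hA2 : A ^ 2 = x - a := Real.sq_sqrt hxa.le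
  have hB2 : B ^ 2 = b - x := Real.sq_sqrt hbx.le
  have hS2 : S ^ 2 = b - a := Real.sq_sqrt hba.le
  have hi : HasDerivAt (fun x : ℝ => (x - a) / (b - a)) (1 / (b - a)) x := by
    simpa using ((hasDerivAt_id x).sub_const a).div_const (b - a)
  have hsq : Real.sqrt ((x - a) / (b - a)) = A / S := Real.sqrt_div hxa.le _
  have hs : HasDerivAt (fun x : ℝ => Real.sqrt ((x - a) / (b - a)))
      (1 / (2 * Real.sqrt ((x - a) / (b - a))) * (1 / (b - a))) x :=
    (Real.hasDerivAt_sqrt (by positivity)).comp x hi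
  have hlt : A / S < 1 := by
    rw [div_lt_one hS0]
    exact Real.sqrt_lt_sqrt hxa.le (by linarith)
  have hpos : 0 < A / S := div_pos hA0 hS0
  have h1 : Real.sqrt ((x - a) / (b - a)) ≠ -1 := by
    rw [hsq]; exact ((by linarith : (-1:ℝ) < A / S).ne')
  have h2 : Real.sqrt ((x - a) / (b - a)) ≠ 1 := by rw [hsq]; exact ne_of_lt hlt
  have harc := (Real.hasDerivAt_arcsin h1 h2).comp x hs
  have h1m : 1 - (A / S) ^ 2 = (B / S) ^ 2 := by
    field_simp
    rw [hA2, hB2, hS2]; ring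
  refine harc.congr_deriv (Eq.symm ?_)
  rw [hsq, h1m, Real.sqrt_sq (by positivity)]
  field_simp
  linear_combination (-1) * hS2

lemma mp_d2 (a b x : ℝ) (ha : 0 < a) (hab : a < b) (hx : x ∈ Set.Ioo a b) :
    HasDerivAt (fun x => Real.arcsin (Real.sqrt (b * (x - a) / ((b - a) * x))))
      (Real.sqrt (a * b) / (2 * x * Real.sqrt (x - a) * Real.sqrt (b - x))) x := by
  obtain ⟨hax, hxb⟩ := hx
  have hba : (0:ℝ) < b - a := by linarith
  have hxa : (0:ℝ) < x - a := by linarith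
  have hbx : (0:ℝ) < b - x := by linarith
  have hx0 : 0 < x := ha.trans hax
  have hb0 : 0 < b := by linarith
  set A := Real.sqrt (x - a) with hA
  set B := Real.sqrt (b - x) with hB
  set S := Real.sqrt (b - a) with hS
  set X := Real.sqrt x with hX
  set SA := Real.sqrt a with hSA
  set SB := Real.sqrt b with hSB
  have hA0 : 0 < A := Real.sqrt_pos.2 hxa
  have hB0 : 0 < B := Real.sqrt_pos.2 hbx
  have hS0 : 0 < S := Real.sqrt_pos.2 hba
  have hX0 : 0 < X := Real.sqrt_pos.2 hx0
  have hSA0 : 0 < SA := Real.sqrt_pos.2 ha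
  have hSB0 : 0 < SB := Real.sqrt_pos.2 hb0
  have hA2 : A ^ 2 = x - a := Real.sq_sqrt hxa.le
  have hB2 : B ^ 2 = b - x := Real.sq_sqrt hbx.le
  have hS2 : S ^ 2 = b - a := Real.sq_sqrt hba.le
  have hX2 : X ^ 2 = x := Real.sq_sqrt hx0.le
  have hSA2 : SA ^ 2 = a := Real.sq_sqrt ha.le
  have hSB2 : SB ^ 2 = b := Real.sq_sqrt hb0.le
  have hi : HasDerivAt (fun x : ℝ => b * (x - a) / ((b - a) * x))
      ((b * ((b - a) * x) - b * (x - a) * (b - a)) / ((b - a) * x) ^ 2) x := by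
    have hnum : HasDerivAt (fun x : ℝ => b * (x - a)) b x := by
      simpa using ((hasDerivAt_id x).sub_const a).const_mul b
    have hden : HasDerivAt (fun x : ℝ => (b - a) * x) (b - a) x := by
      simpa using (hasDerivAt_id x).const_mul (b - a)
    exact hnum.div hden (by positivity)
  have hsq : Real.sqrt (b * (x - a) / ((b - a) * x)) = SB * A / (S * X) := by
    rw [Real.sqrt_div (by positivity), Real.sqrt_mul hb0.le, Real.sqrt_mul hba.le]
  have hs : HasDerivAt (fun x : ℝ => Real.sqrt (b * (x - a) / ((b - a) * x)))
      (1 / (2 * Real.sqrt (b * (x - a) / ((b - a) * x))) *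
        ((b * ((b - a) * x) - b * (x - a) * (b - a)) / ((b - a) * x) ^ 2)) x :=
    (Real.hasDerivAt_sqrt (by positivity)).comp x hi
  have hkey : (S * X) ^ 2 - (SB * A) ^ 2 = (SA * B) ^ 2 := by
    rw [mul_pow, mul_pow, mul_pow, hA2, hB2, hS2, hX2, hSA2, hSB2]; ring
  have hlt : SB * A / (S * X) < 1 := by
    rw [div_lt_one (by positivity)]
    apply lt_of_pow_lt_pow_left₀ 2 (by positivity)
    nlinarith [sq_nonneg (SA * B), mul_pos hSA0 hB0]
  have hpos : 0 < SB * A / (S * X) := by positivity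
  have h1 : Real.sqrt (b * (x - a) / ((b - a) * x)) ≠ -1 := by
    rw [hsq]; exact ((by linarith : (-1:ℝ) < SB * A / (S * X)).ne')
  have h2 : Real.sqrt (b * (x - a) / ((b - a) * x)) ≠ 1 := by rw [hsq]; exact ne_of_lt hlt
  have harc := (Real.hasDerivAt_arcsin h1 h2).comp x hs
  have h1m : 1 - (SB * A / (S * X)) ^ 2 = (SA * B / (S * X)) ^ 2 := by
    rw [div_pow, div_pow, ← hkey]
    field_simp
  refine harc.congr_deriv (Eq.symm ?_)
  rw [hsq, h1m, Real.sqrt_sq (by positivity), Real.sqrt_mul ha.le,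
    show x - a = A ^ 2 from hA2.symm, show b - a = S ^ 2 from hS2.symm,
    show b = SB ^ 2 from hSB2.symm, show a = SA ^ 2 from hSA2.symm,
    show x = X ^ 2 from hX2.symm]
  field_simp
  linear_combination SB * (hSA2 + hA2 - hX2) + SA * Real.sqrt (SB ^ 2) * (Real.sqrt_sq hSA0.le) + SA ^ 2 * (Real.sqrt_sq hSB0.le)

lemma mp_key (a b : ℝ) (ha : 0 < a) (hab : a < b) :
    ∫ x in a..b, Real.sqrt (b - x) / (x * Real.sqrt (x - a))
      = Real.pi * Real.sqrt (b / a) - Real.pi := by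
  have hba : (0:ℝ) < b - a := by linarith
  have hb0 : 0 < b := by linarith
  set G := fun x => 2 * Real.sqrt (b/a) * Real.arcsin (Real.sqrt (b*(x-a)/((b-a)*x)))
      - 2 * Real.arcsin (Real.sqrt ((x-a)/(b-a))) with hG
  have hderiv : ∀ x ∈ Set.Ioo a b, HasDerivAt G (Real.sqrt (b-x)/(x*Real.sqrt (x-a))) x := by
    intro x hx
    obtain ⟨hax, hxb⟩ := hx
    have hx0 : 0 < x := ha.trans hax
    have hxa : (0:ℝ) < x - a := by linarith
    have hbx : (0:ℝ) < b - x := by linarith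
    have hA0 : 0 < Real.sqrt (x - a) := Real.sqrt_pos.2 hxa
    have hB0 : 0 < Real.sqrt (b - x) := Real.sqrt_pos.2 hbx
    have hB2 : Real.sqrt (b - x) ^ 2 = b - x := Real.sq_sqrt hbx.le
    have h2 := (mp_d2 a b x ha hab ⟨hax, hxb⟩).const_mul (2 * Real.sqrt (b/a))
    have h1 := (mp_d1 a b x hab ⟨hax, hxb⟩).const_mul 2
    have hcomb := h2.sub h1
    have hsab : Real.sqrt (b/a) * Real.sqrt (a*b) = b := by
      rw [← Real.sqrt_mul (by positivity)]
      rw [show b / a * (a * b) = b ^ 2 by field_simp]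
      exact Real.sqrt_sq hb0.le
    refine hcomb.congr_deriv (Eq.symm ?_)
    rw [show 2 * Real.sqrt (b/a) * (Real.sqrt (a*b) / (2*x*Real.sqrt (x-a)*Real.sqrt (b-x)))
          - 2*(1/(2*Real.sqrt (x-a)*Real.sqrt (b-x)))
        = (Real.sqrt (b/a)*Real.sqrt (a*b))/(x*Real.sqrt (x-a)*Real.sqrt (b-x))
          - 1/(Real.sqrt (x-a)*Real.sqrt (b-x)) from by ring, hsab]
    field_simp
    linear_combination hB2
  have hcont : ContinuousOn G (Set.Icc a b) := by
    apply ContinuousOn.sub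
    · apply ContinuousOn.mul continuousOn_const
      apply Real.continuous_arcsin.comp_continuousOn
      apply ContinuousOn.sqrt
      apply ContinuousOn.div (by fun_prop) (by fun_prop)
      intro x hx
      have : 0 < x := lt_of_lt_of_le ha hx.1
      positivity
    · apply ContinuousOn.mul continuousOn_const
      apply Real.continuous_arcsin.comp_continuousOn
      apply ContinuousOn.sqrt
      exact (by fun_prop : ContinuousOn (fun x : ℝ => x - a) _).div_const _
  rw [integral_eq_sub_of_hasDerivAt_of_le hab.le hcont hderiv (mp_integrable a b ha hab)]
  have hGa : G a = 0 := by
    simp [hG]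
  have hGb : G b = Real.pi * Real.sqrt (b/a) - Real.pi := by
    have e1 : b * (b - a) / ((b - a) * b) = 1 := by
      field_simp
    have e2 : (b - a) / (b - a) = 1 := div_self hba.ne'
    simp only [hG, e1, e2, Real.sqrt_one, Real.arcsin_one]
    ring
  rw [hGa, hGb]
  ring


/-- Principal-value integral of the Marchenko–Pastur density at the left edge `a`:
since the density vanishes like a square root at `x = a`, the integral converges
absolutely and equals `1/(√y - y)`. -/
theorem marchenko_pastur_pv_integral_left_edge
    (y : ℝ) (hy0 : 0 < y) (hy1 : y < 1) :
    ∫ x in ((1 - Real.sqrt y) ^ 2)..((1 + Real.sqrt y) ^ 2),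
        ((1 / (2 * Real.pi * x * y)) *
            Real.sqrt (((1 + Real.sqrt y) ^ 2 - x) * (x - (1 - Real.sqrt y) ^ 2))) /
          (x - (1 - Real.sqrt y) ^ 2) = 1 / (Real.sqrt y - y) := by
  set s := Real.sqrt y with hs
  have hs0 : 0 < s := Real.sqrt_pos.2 hy0
  have hs1 : s < 1 := by
    rw [hs, show (1:ℝ) = Real.sqrt 1 by simp]
    exact Real.sqrt_lt_sqrt hy0.le hy1
  have hy : s ^ 2 = y := Real.sq_sqrt hy0.le
  set a := (1 - s) ^ 2 with ha'
  set b := (1 + s) ^ 2 with hb'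
  have h1s0 : (0:ℝ) < 1 - s := by linarith
  have ha : 0 < a := by rw [ha']; positivity
  have hab : a < b := by rw [ha', hb']; nlinarith
  have hsqrtba : Real.sqrt (b / a) = (1 + s) / (1 - s) := by
    rw [ha', hb', Real.sqrt_div (by positivity), Real.sqrt_sq (by linarith),
      Real.sqrt_sq (by linarith)]
  clear_value a b
  have hcong : Set.EqOn
      (fun x => ((1 / (2 * Real.pi * x * y)) * Real.sqrt ((b - x) * (x - a))) / (x - a))
      (fun x => (1 / (2 * Real.pi * y)) * (Real.sqrt (b - x) / (x * Real.sqrt (x - a))))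
      (Set.uIcc a b) := by
    intro x hx
    rw [Set.uIcc_of_le hab.le] at hx
    obtain ⟨hax, hxb⟩ := hx
    have hx0 : 0 < x := lt_of_lt_of_le ha hax
    have hsqm : Real.sqrt ((b - x) * (x - a)) = Real.sqrt (b - x) * Real.sqrt (x - a) :=
      Real.sqrt_mul (by linarith) _
    simp only [hsqm]
    rcases eq_or_lt_of_le hax with h | h
    · simp [← h]
    · have hxa : 0 < x - a := by linarith
      have hA0 : 0 < Real.sqrt (x - a) := Real.sqrt_pos.2 hxa
      have hA2 : Real.sqrt (x - a) ^ 2 = x - a := Real.sq_sqrt hxa.le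
      rw [show x - a = Real.sqrt (x - a) ^ 2 from hA2.symm]
      field_simp
      linear_combination (Real.sqrt (b - x)) * (Real.sq_sqrt (sq_nonneg (Real.sqrt (x - a))))
  rw [intervalIntegral.integral_congr hcong, intervalIntegral.integral_const_mul,
    mp_key a b ha hab]
  rw [hsqrtba, ← hy]
  have h1s : (1:ℝ) - s ≠ 0 := by intro h; linarith
  have hss : s - s ^ 2 ≠ 0 := by nlinarith
  field_simp
  ring
end
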